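/- arXiv:2211.04059 — 10 statements merged into one kernel-verified Lean document; each statement's English description precedes it below -/
import Mathlib

section
/- Let Λ < 0. Define a(t) = cos(√|Λ|·t) and b(t) = 1/√|Λ| on the interval I = (−π/(2√|Λ|), π/(2√|Λ|)). Then a and b are positive and twice differentiable on I and satisfy the orthogonal vacuum system with parameters Λ and ε = −1, i.e. for all t ∈ I: b''(t) = −b'(t)²/b(t) − |Λ|·b(t) − ε/b(t) − a'(t)·b'(t)/a(t), a''(t) = −|Λ|·a(t) − 2·a'(t)·b'(t)/b(t), and 0 = |Λ| + ε/b(t)² + b'(t)²/b(t)² + 2·b'(t)·a'(t)/(b(t)·a(t)). -/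
open Real Set

/-- The pancake solution `a(t) = cos(√|Λ|·t)`, `b(t) = 1/√|Λ|` (with `Λ < 0`) is positive and
twice differentiable on `I = (−π/(2√|Λ|), π/(2√|Λ|))` and satisfies the orthogonal vacuum
system with parameters `Λ` and `ε = −1`. -/
theorem pancake_solves_vacuum_system (Λ : ℝ) (hΛ : Λ < 0) (ε : ℝ) (hε : ε = -1)
    (a b : ℝ → ℝ)
    (ha : a = fun t => Real.cos (Real.sqrt |Λ| * t))
    (hb : b = fun _ => 1 / Real.sqrt |Λ|) :
    ∀ t ∈ Set.Ioo (-(π / (2 * Real.sqrt |Λ|))) (π / (2 * Real.sqrt |Λ|)),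
      0 < a t ∧ 0 < b t ∧
      DifferentiableAt ℝ a t ∧ DifferentiableAt ℝ (deriv a) t ∧
      DifferentiableAt ℝ b t ∧ DifferentiableAt ℝ (deriv b) t ∧
      deriv (deriv b) t
        = -(deriv b t) ^ 2 / b t - |Λ| * b t - ε / b t - deriv a t * deriv b t / a t ∧
      deriv (deriv a) t = -|Λ| * a t - 2 * deriv a t * deriv b t / b t ∧
      (0 : ℝ) = |Λ| + ε / (b t) ^ 2 + (deriv b t) ^ 2 / (b t) ^ 2
          + 2 * deriv b t * deriv a t / (b t * a t) := by
  set s := Real.sqrt |Λ| with hs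
  have hΛpos : 0 < |Λ| := abs_pos.mpr (ne_of_lt hΛ)
  have hspos : 0 < s := Real.sqrt_pos.mpr hΛpos
  have hss : s * s = |Λ| := Real.mul_self_sqrt (le_of_lt hΛpos)
  -- derivative of a
  have hda : ∀ t : ℝ, HasDerivAt a (-Real.sin (s * t) * s) t := by
    intro t
    rw [ha]
    simpa [Function.comp_def] using (Real.hasDerivAt_cos (s * t)).comp t ((hasDerivAt_id t).const_mul s)
  have hda' : deriv a = fun t => -Real.sin (s * t) * s := funext fun t => (hda t).deriv
  have hdda : ∀ t : ℝ, HasDerivAt (deriv a) (-(Real.cos (s * t) * s) * s) t := by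
    intro t
    rw [hda']
    have := ((Real.hasDerivAt_sin (s * t)).comp t ((hasDerivAt_id t).const_mul s)).neg.mul_const s
    simpa using this
  have hdb : deriv b = fun _ => (0 : ℝ) := by
    rw [hb]; funext t; simp
  have hddb : deriv (deriv b) = fun _ => (0 : ℝ) := by
    rw [hdb]; funext t; simp
  intro t ht
  obtain ⟨ht1, ht2⟩ := ht
  have hst : s * t ∈ Set.Ioo (-(π / 2)) (π / 2) := by
    constructor
    · have : s * (-(π / (2 * s))) < s * t := by
        exact (mul_lt_mul_iff_right₀ hspos).mpr ht1
      calc -(π / 2) = s * (-(π / (2 * s))) := by field_simp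
        _ < s * t := this
    · have : s * t < s * (π / (2 * s)) := (mul_lt_mul_iff_right₀ hspos).mpr ht2
      calc s * t < s * (π / (2 * s)) := this
        _ = π / 2 := by field_simp
  have hcos : 0 < Real.cos (s * t) := Real.cos_pos_of_mem_Ioo hst
  have hat : a t = Real.cos (s * t) := by rw [ha]
  have hbt : b t = 1 / s := by rw [hb]
  refine ⟨by rw [hat]; exact hcos, by rw [hbt]; positivity, (hda t).differentiableAt,
    (hdda t).differentiableAt, ?_, ?_, ?_, ?_, ?_⟩
  · rw [hb]; exact differentiableAt_const _
  · rw [hdb]; exact differentiableAt_const _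
  · rw [hddb, hdb, hbt, hε]
    field_simp
    linear_combination -hss
  · rw [(hdda t).deriv, hdb, hat, ← hss]
    simp
    ring
  · rw [hdb, hbt, hε]
    simp only
    field_simp
    linear_combination hss
end

section
/- Let Λ < 0 and let a(t) = cos(√|Λ|·t), b(t) = 1/√|Λ| be the pancake solution on I = (−π/(2√|Λ|), π/(2√|Λ|)). Then the Kretschmann expression K(t) := 8·b''(t)²/b(t)² + 4·b'(t)⁴/b(t)⁴ + 8·a'(t)²·b'(t)²/(a(t)²·b(t)²) + 8·b'(t)²/b(t)⁴ + 4/b(t)⁴ + 4·a''(t)²/a(t)² is constant on I and equals 8Λ². In particular the Kretschmann expression of the pancake solution remains bounded. -/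
open Real Set

/-- For the pancake solution `a(t) = cos(√|Λ|·t)`, `b(t) = 1/√|Λ|` with `Λ < 0`, the
Kretschmann expression
`K = 8(b'')²/b² + 4(b')⁴/b⁴ + 8(a')²(b')²/(a²b²) + 8(b')²/b⁴ + 4/b⁴ + 4(a'')²/a²`
is constant on `I = (−π/(2√|Λ|), π/(2√|Λ|))` and equals `8Λ²`; in particular it is
bounded on `I`. -/
theorem pancake_kretschmann_bounded (Λ : ℝ) (hΛ : Λ < 0)
    (a b K : ℝ → ℝ)
    (ha : a = fun t => Real.cos (Real.sqrt |Λ| * t))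
    (hb : b = fun _ => 1 / Real.sqrt |Λ|)
    (hK : K = fun t =>
      8 * (deriv (deriv b) t) ^ 2 / (b t) ^ 2
      + 4 * (deriv b t) ^ 4 / (b t) ^ 4
      + 8 * (deriv a t) ^ 2 * (deriv b t) ^ 2 / ((a t) ^ 2 * (b t) ^ 2)
      + 8 * (deriv b t) ^ 2 / (b t) ^ 4
      + 4 / (b t) ^ 4
      + 4 * (deriv (deriv a) t) ^ 2 / (a t) ^ 2) :
    (∀ t ∈ Set.Ioo (-(π / (2 * Real.sqrt |Λ|))) (π / (2 * Real.sqrt |Λ|)),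
        K t = 8 * Λ ^ 2) ∧
    (∃ M : ℝ, ∀ t ∈ Set.Ioo (-(π / (2 * Real.sqrt |Λ|))) (π / (2 * Real.sqrt |Λ|)),
        |K t| ≤ M) := by
  have hΛ0 : |Λ| ≠ 0 := abs_ne_zero.mpr hΛ.ne
  have hs : 0 < Real.sqrt |Λ| := Real.sqrt_pos.mpr (abs_pos.mpr hΛ.ne)
  set s := Real.sqrt |Λ| with hsdef
  have hs2 : s ^ 2 = |Λ| := Real.sq_sqrt (abs_nonneg Λ)
  have hdb : deriv b = fun _ => (0 : ℝ) := by
    rw [hb]; funext t; exact deriv_const t _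
  have hddb : deriv (deriv b) = fun _ => (0 : ℝ) := by
    rw [hdb]; funext t; exact deriv_const t _
  have hda : deriv a = fun t => -(s * Real.sin (s * t)) := by
    rw [ha]; funext t
    have hi : HasDerivAt (fun t : ℝ => s * t) s t := by
      simpa using (hasDerivAt_id t).const_mul s
    have h : HasDerivAt (fun t => Real.cos (s * t)) (-Real.sin (s * t) * s) t := hi.cos
    rw [h.deriv]; ring
  have hdda : deriv (deriv a) = fun t => -(s ^ 2 * Real.cos (s * t)) := by
    rw [hda]; funext t
    have h : HasDerivAt (fun t => -(s * Real.sin (s * t))) (-(s ^ 2 * Real.cos (s * t))) t := by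
      have hi : HasDerivAt (fun t : ℝ => s * t) s t := by
        simpa using (hasDerivAt_id t).const_mul s
      have h1 : HasDerivAt (fun t => Real.sin (s * t)) (Real.cos (s * t) * s) t := hi.sin
      have h2 : HasDerivAt (fun t => -(s * Real.sin (s * t))) (-(s * (Real.cos (s * t) * s))) t :=
        (h1.const_mul s).neg
      convert h2 using 1; ring
    exact h.deriv
  have key : ∀ t ∈ Set.Ioo (-(π / (2 * s))) (π / (2 * s)), K t = 8 * Λ ^ 2 := by
    intro t ht
    have hfrac : s * (π / (2 * s)) = π / 2 := by field_simp
    have hcos : 0 < Real.cos (s * t) := by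
      apply Real.cos_pos_of_mem_Ioo
      constructor
      · nlinarith [ht.1, hs]
      · nlinarith [ht.2, hs]
    have hbne : (1 : ℝ) / s ≠ 0 := by positivity
    rw [hK]
    simp only [hdda]
    simp only [hddb, hda, hdb, deriv_const']
    simp only [ha, hb]
    have hc2 : Real.cos (s * t) ^ 2 ≠ 0 := by positivity
    field_simp
    have : s ^ 4 = Λ ^ 2 := by
      rw [show s ^ 4 = (s ^ 2) ^ 2 by ring, hs2, sq_abs]
    nlinarith [this, hc2, sq_nonneg (Real.cos (s*t))]
  refine ⟨key, 8 * Λ ^ 2, fun t ht => ?_⟩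
  rw [key t ht, abs_of_nonneg (by positivity)]
end

section
/- Let ε ∈ ℝ and let a, b be positive twice differentiable functions on a real interval I satisfying the orthogonal vacuum system with |Λ| = 1 and parameter ε. Define H := a'/a + 2b'/b and σ := a'/a − 2b'/b on I. Then for all t ∈ I: H'(t) = −1 − (1/4)·H(t)σ(t) − (3/8)·(H(t)² + σ(t)²), σ'(t) = −1 − (3/4)·H(t)σ(t) − (5/8)·H(t)² + (3/8)·σ(t)², and 1 + (5/16)·H(t)² − (3/16)·σ(t)² − (1/8)·H(t)σ(t) = −ε/b(t)². In particular this last quantity is positive when ε = −1, zero when ε = 0, and negative when ε = 1. -/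
open Real Set

/-- For positive twice differentiable `a, b` on an interval `I = (α, β)` satisfying the
orthogonal vacuum system with `|Λ| = 1` and parameter `ε`, the Hubble scalar
`H = a'/a + 2b'/b` and shear `σ = a'/a − 2b'/b` satisfy
`H' = −1 − (1/4)Hσ − (3/8)(H² + σ²)`, `σ' = −1 − (3/4)Hσ − (5/8)H² + (3/8)σ²`, and
`1 + (5/16)H² − (3/16)σ² − (1/8)Hσ = −ε/b²`; in particular the latter quantity is
positive for `ε = −1`, zero for `ε = 0` and negative for `ε = 1`. -/
theorem hubble_shear_system (ε : ℝ) (α β : ℝ) (a b H σ : ℝ → ℝ)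
    (hpos : ∀ t ∈ Set.Ioo α β, 0 < a t ∧ 0 < b t)
    (hdiff : ∀ t ∈ Set.Ioo α β, DifferentiableAt ℝ a t ∧ DifferentiableAt ℝ (deriv a) t ∧
      DifferentiableAt ℝ b t ∧ DifferentiableAt ℝ (deriv b) t)
    (heqb : ∀ t ∈ Set.Ioo α β, deriv (deriv b) t
      = -(deriv b t) ^ 2 / b t - b t - ε / b t - deriv a t * deriv b t / a t)
    (heqa : ∀ t ∈ Set.Ioo α β, deriv (deriv a) t
      = -a t - 2 * deriv a t * deriv b t / b t)
    (hconstr : ∀ t ∈ Set.Ioo α β, (0 : ℝ) = 1 + ε / (b t) ^ 2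
      + (deriv b t) ^ 2 / (b t) ^ 2 + 2 * deriv b t * deriv a t / (b t * a t))
    (hH : H = fun t => deriv a t / a t + 2 * deriv b t / b t)
    (hσ : σ = fun t => deriv a t / a t - 2 * deriv b t / b t) :
    ∀ t ∈ Set.Ioo α β,
      deriv H t = -1 - (1 / 4) * (H t * σ t) - (3 / 8) * ((H t) ^ 2 + (σ t) ^ 2) ∧
      deriv σ t = -1 - (3 / 4) * (H t * σ t) - (5 / 8) * (H t) ^ 2 + (3 / 8) * (σ t) ^ 2 ∧
      1 + (5 / 16) * (H t) ^ 2 - (3 / 16) * (σ t) ^ 2 - (1 / 8) * (H t * σ t)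
        = -ε / (b t) ^ 2 ∧
      (ε = -1 → 0 < 1 + (5 / 16) * (H t) ^ 2 - (3 / 16) * (σ t) ^ 2
          - (1 / 8) * (H t * σ t)) ∧
      (ε = 0 → 1 + (5 / 16) * (H t) ^ 2 - (3 / 16) * (σ t) ^ 2
          - (1 / 8) * (H t * σ t) = 0) ∧
      (ε = 1 → 1 + (5 / 16) * (H t) ^ 2 - (3 / 16) * (σ t) ^ 2
          - (1 / 8) * (H t * σ t) < 0) := by
  intro t ht
  obtain ⟨ha, hb⟩ := hpos t ht
  obtain ⟨hda, hdda, hdb, hddb⟩ := hdiff t ht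
  have hane : a t ≠ 0 := ha.ne'
  have hbne : b t ≠ 0 := hb.ne'
  have hc := hconstr t ht
  have hea := heqa t ht
  have heb := heqb t ht
  have hHa : HasDerivAt (fun s => deriv a s / a s)
      ((deriv (deriv a) t * a t - deriv a t * deriv a t) / (a t) ^ 2) t :=
    (hdda.hasDerivAt).div (hda.hasDerivAt) hane
  have hHb : HasDerivAt (fun s => deriv b s / b s)
      ((deriv (deriv b) t * b t - deriv b t * deriv b t) / (b t) ^ 2) t :=
    (hddb.hasDerivAt).div (hdb.hasDerivAt) hbne
  have hHb2 : HasDerivAt (fun s => 2 * (deriv b s / b s))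
      (2 * ((deriv (deriv b) t * b t - deriv b t * deriv b t) / (b t) ^ 2)) t :=
    hHb.const_mul 2
  have hHder : deriv H t = (deriv (deriv a) t * a t - deriv a t * deriv a t) / (a t) ^ 2
      + 2 * ((deriv (deriv b) t * b t - deriv b t * deriv b t) / (b t) ^ 2) := by
    rw [hH]
    have h := hHa.add hHb2
    have h' : HasDerivAt (fun s => deriv a s / a s + 2 * deriv b s / b s)
        ((deriv (deriv a) t * a t - deriv a t * deriv a t) / (a t) ^ 2
        + 2 * ((deriv (deriv b) t * b t - deriv b t * deriv b t) / (b t) ^ 2)) t := by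
      simpa [mul_div_assoc, Pi.add_def] using h
    exact h'.deriv
  have hσder : deriv σ t = (deriv (deriv a) t * a t - deriv a t * deriv a t) / (a t) ^ 2
      - 2 * ((deriv (deriv b) t * b t - deriv b t * deriv b t) / (b t) ^ 2) := by
    rw [hσ]
    have h := hHa.sub hHb2
    have h' : HasDerivAt (fun s => deriv a s / a s - 2 * deriv b s / b s)
        ((deriv (deriv a) t * a t - deriv a t * deriv a t) / (a t) ^ 2
        - 2 * ((deriv (deriv b) t * b t - deriv b t * deriv b t) / (b t) ^ 2)) t := by
      simpa [mul_div_assoc, Pi.sub_def] using h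
    exact h'.deriv
  have hHt : H t = deriv a t / a t + 2 * deriv b t / b t := by rw [hH]
  have hσt : σ t = deriv a t / a t - 2 * deriv b t / b t := by rw [hσ]
  have hApart : (deriv (deriv a) t * a t - deriv a t * deriv a t) / (a t) ^ 2
      = -1 - 2 * (deriv a t / a t) * (deriv b t / b t) - (deriv a t / a t) ^ 2 := by
    rw [hea]; field_simp
  have hBpart : (deriv (deriv b) t * b t - deriv b t * deriv b t) / (b t) ^ 2
      = -2 * (deriv b t / b t) ^ 2 - 1 - ε / (b t) ^ 2
        - (deriv a t / a t) * (deriv b t / b t) := by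
    rw [heb]; field_simp; ring
  have key3 : 1 + (5 / 16) * (H t) ^ 2 - (3 / 16) * (σ t) ^ 2 - (1 / 8) * (H t * σ t)
      = -ε / (b t) ^ 2 := by
    rw [hHt, hσt]
    linear_combination -hc
  refine ⟨?_, ?_, key3, ?_, ?_, ?_⟩
  · rw [hHder, hHt, hσt, hApart, hBpart]
    linear_combination 2 * hc
  · rw [hσder, hHt, hσt, hApart, hBpart]
    linear_combination -2 * hc
  · intro hε
    rw [key3, hε]
    positivity
  · intro hε
    rw [key3, hε]
    simp
  · intro hε
    rw [key3, hε]
    have h2 : (0:ℝ) < (b t) ^ 2 := by positivity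
    rw [neg_div]
    simpa using div_pos one_pos h2
end

section
/- Let Λ < 0, ε ∈ ℝ, and let a, b be positive twice differentiable functions on an interval I satisfying only the two evolution equations b'' = −(b')²/b − |Λ|b − ε/b − a'b'/a and a'' = −|Λ|a − 2a'b'/b. Define the constraint quantity C(t) := |Λ| + ε/b(t)² + b'(t)²/b(t)² + 2·b'(t)a'(t)/(b(t)a(t)). Then C is differentiable on I and satisfies C'(t) = −2·(a'(t)/a(t) + 2·b'(t)/b(t))·C(t) for all t ∈ I. In particular, if C vanishes at one point of I then C vanishes identically on I (propagation of the Hamiltonian constraint). -/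
open Real Set

/-- Propagation of the Hamiltonian constraint: if positive twice differentiable `a, b` on
`(α, β)` satisfy only the two evolution equations of the orthogonal vacuum system with
`Λ < 0` and `ε`, then the constraint quantity
`C = |Λ| + ε/b² + (b')²/b² + 2b'a'/(ba)` is differentiable and satisfies
`C' = −2(a'/a + 2b'/b)·C`; in particular if `C` vanishes at one point of the interval it
vanishes identically. -/
theorem constraint_propagation (Λ : ℝ) (hΛ : Λ < 0) (ε α β : ℝ) (a b C : ℝ → ℝ)
    (hpos : ∀ t ∈ Set.Ioo α β, 0 < a t ∧ 0 < b t)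
    (ha : ∀ t ∈ Set.Ioo α β, HasDerivAt a (deriv a t) t)
    (hb : ∀ t ∈ Set.Ioo α β, HasDerivAt b (deriv b t) t)
    (ha'' : ∀ t ∈ Set.Ioo α β, HasDerivAt (deriv a)
      (-|Λ| * a t - 2 * deriv a t * deriv b t / b t) t)
    (hb'' : ∀ t ∈ Set.Ioo α β, HasDerivAt (deriv b)
      (-(deriv b t) ^ 2 / b t - |Λ| * b t - ε / b t - deriv a t * deriv b t / a t) t)
    (hC : C = fun t => |Λ| + ε / (b t) ^ 2 + (deriv b t) ^ 2 / (b t) ^ 2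
      + 2 * deriv b t * deriv a t / (b t * a t)) :
    (∀ t ∈ Set.Ioo α β, HasDerivAt C
      (-2 * (deriv a t / a t + 2 * deriv b t / b t) * C t) t) ∧
    (∀ t₀ ∈ Set.Ioo α β, C t₀ = 0 → ∀ t ∈ Set.Ioo α β, C t = 0) := by
  have key : ∀ t ∈ Set.Ioo α β, HasDerivAt C
      (-2 * (deriv a t / a t + 2 * deriv b t / b t) * C t) t := by
    intro t ht
    have hA0 : a t ≠ 0 := (hpos t ht).1.ne'
    have hB0 : b t ≠ 0 := (hpos t ht).2.ne'
    have hA := ha t ht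
    have hB := hb t ht
    have hA' := ha'' t ht
    have hB' := hb'' t ht
    have h2 : HasDerivAt (fun s => ε / (b s) ^ 2)
        ((0 * (b t) ^ 2 - ε * (2 * (b t) ^ 1 * deriv b t)) / ((b t) ^ 2) ^ 2) t :=
      (hasDerivAt_const t ε).div (hB.pow 2) (pow_ne_zero 2 hB0)
    have h3 : HasDerivAt (fun s => (deriv b s) ^ 2 / (b s) ^ 2)
        (((2 * (deriv b t) ^ 1 *
            (-(deriv b t) ^ 2 / b t - |Λ| * b t - ε / b t - deriv a t * deriv b t / a t))
            * (b t) ^ 2 - (deriv b t) ^ 2 * (2 * (b t) ^ 1 * deriv b t)) / ((b t) ^ 2) ^ 2) t :=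
      (hB'.pow 2).div (hB.pow 2) (pow_ne_zero 2 hB0)
    have h4 : HasDerivAt (fun s => 2 * deriv b s * deriv a s / (b s * a s))
        (((2 * (-(deriv b t) ^ 2 / b t - |Λ| * b t - ε / b t - deriv a t * deriv b t / a t)
            * deriv a t + 2 * deriv b t * (-|Λ| * a t - 2 * deriv a t * deriv b t / b t))
            * (b t * a t) - 2 * deriv b t * deriv a t * (deriv b t * a t + b t * deriv a t))
          / (b t * a t) ^ 2) t := by
      have hnum : HasDerivAt (fun s => 2 * deriv b s * deriv a s)
          (2 * (-(deriv b t) ^ 2 / b t - |Λ| * b t - ε / b t - deriv a t * deriv b t / a t)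
            * deriv a t + 2 * deriv b t * (-|Λ| * a t - 2 * deriv a t * deriv b t / b t)) t := by
        have := (hB'.const_mul (2:ℝ)).mul hA'
        exact this
      exact hnum.div (hB.mul hA) (mul_ne_zero hB0 hA0)
    have hsum := (((hasDerivAt_const t |Λ|).add h2).add h3).add h4
    rw [hC]
    refine hsum.congr_deriv ?_
    field_simp
    ring
  refine ⟨key, ?_⟩
  intro t₀ ht₀ hC0 t ht
  set D : ℝ → ℝ := fun s => (a s) ^ 2 * (b s) ^ 4 * C s with hD
  have hDder : ∀ s ∈ Set.Ioo α β, HasDerivAt D 0 s := by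
    intro s hs
    have hA0 : a s ≠ 0 := (hpos s hs).1.ne'
    have hB0 : b s ≠ 0 := (hpos s hs).2.ne'
    have h := (((ha s hs).pow 2).mul ((hb s hs).pow 4)).mul (key s hs)
    refine h.congr_deriv ?_
    simp only [Pi.mul_apply, Pi.pow_apply]
    field_simp
    ring
  have hconst : D t = D t₀ := by
    apply (convex_Ioo α β).is_const_of_fderivWithin_eq_zero
      (fun s hs => ((hDder s hs).differentiableAt).differentiableWithinAt) ?_ ht ht₀
    intro s hs
    rw [fderivWithin_of_isOpen isOpen_Ioo hs, (hDder s hs).hasFDerivAt.fderiv]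
    ext
    simp
  have hA0 : a t ≠ 0 := (hpos t ht).1.ne'
  have hB0 : b t ≠ 0 := (hpos t ht).2.ne'
  have : D t = 0 := by rw [hconst]; simp [hD, hC0]
  have hne : (a t) ^ 2 * (b t) ^ 4 ≠ 0 := by positivity
  have := this
  rw [hD] at this
  simp only at this
  rcases mul_eq_zero.mp this with h | h
  · exact absurd h hne
  · exact h
end

section
/- Let Λ < 0, ε ∈ ℝ, and let a, b be positive twice differentiable functions and φ a twice differentiable function on an interval I satisfying the evolution equations b'' = −(b')²/b − |Λ|b − ε/b − a'b'/a, a'' = −|Λ|a − 2a'b'/b, together with the wave equation φ'' = −(a'/a + 2b'/b)·φ'. Define C_φ(t) := |Λ| + ε/b(t)² + b'(t)²/b(t)² + 2·b'(t)a'(t)/(b(t)a(t)) − 4π·φ'(t)². Then C_φ'(t) = −2·(a'(t)/a(t) + 2·b'(t)/b(t))·C_φ(t) for all t ∈ I. In particular, if the scalar-field Hamiltonian constraint 4π(φ')² = |Λ| + ε/b² + (b')²/b² + 2b'a'/(ba) holds at one point of I, it holds on all of I. -/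
open Real Set

/-- Propagation of the scalar-field Hamiltonian constraint: for positive twice
differentiable `a, b` and a twice differentiable scalar field `φ` on `(α, β)` satisfying the
evolution equations with `Λ < 0`, `ε`, and the wave equation `φ'' = −(a'/a + 2b'/b)φ'`, the
quantity `C_φ = |Λ| + ε/b² + (b')²/b² + 2b'a'/(ba) − 4π(φ')²` satisfies
`C_φ' = −2(a'/a + 2b'/b)·C_φ`; in particular if the constraint
`4π(φ')² = |Λ| + ε/b² + (b')²/b² + 2b'a'/(ba)` holds at one point it holds everywhere. -/
theorem scalar_field_constraint_propagation (Λ : ℝ) (hΛ : Λ < 0) (ε α β : ℝ)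
    (a b φ Cφ : ℝ → ℝ)
    (hpos : ∀ t ∈ Set.Ioo α β, 0 < a t ∧ 0 < b t)
    (ha : ∀ t ∈ Set.Ioo α β, HasDerivAt a (deriv a t) t)
    (hb : ∀ t ∈ Set.Ioo α β, HasDerivAt b (deriv b t) t)
    (hφ : ∀ t ∈ Set.Ioo α β, HasDerivAt φ (deriv φ t) t)
    (ha'' : ∀ t ∈ Set.Ioo α β, HasDerivAt (deriv a)
      (-|Λ| * a t - 2 * deriv a t * deriv b t / b t) t)
    (hb'' : ∀ t ∈ Set.Ioo α β, HasDerivAt (deriv b)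
      (-(deriv b t) ^ 2 / b t - |Λ| * b t - ε / b t - deriv a t * deriv b t / a t) t)
    (hφ'' : ∀ t ∈ Set.Ioo α β, HasDerivAt (deriv φ)
      (-(deriv a t / a t + 2 * deriv b t / b t) * deriv φ t) t)
    (hC : Cφ = fun t => |Λ| + ε / (b t) ^ 2 + (deriv b t) ^ 2 / (b t) ^ 2
      + 2 * deriv b t * deriv a t / (b t * a t) - 4 * π * (deriv φ t) ^ 2) :
    (∀ t ∈ Set.Ioo α β, HasDerivAt Cφ
      (-2 * (deriv a t / a t + 2 * deriv b t / b t) * Cφ t) t) ∧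
    (∀ t₀ ∈ Set.Ioo α β,
      4 * π * (deriv φ t₀) ^ 2 = |Λ| + ε / (b t₀) ^ 2 + (deriv b t₀) ^ 2 / (b t₀) ^ 2
        + 2 * deriv b t₀ * deriv a t₀ / (b t₀ * a t₀) →
      ∀ t ∈ Set.Ioo α β,
        4 * π * (deriv φ t) ^ 2 = |Λ| + ε / (b t) ^ 2 + (deriv b t) ^ 2 / (b t) ^ 2
          + 2 * deriv b t * deriv a t / (b t * a t)) := by
  subst hC
  set P : ℝ → ℝ := fun t => |Λ| + ε / (b t) ^ 2 + (deriv b t) ^ 2 / (b t) ^ 2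
      + 2 * deriv b t * deriv a t / (b t * a t) - 4 * π * (deriv φ t) ^ 2 with hP
  have key : ∀ t ∈ Set.Ioo α β, HasDerivAt P
      (-2 * (deriv a t / a t + 2 * deriv b t / b t) * P t) t := by
    intro t ht
    obtain ⟨hA, hB⟩ := hpos t ht
    have hA0 : a t ≠ 0 := hA.ne'
    have hB0 : b t ≠ 0 := hB.ne'
    have h1 : HasDerivAt (fun s => ε / (b s) ^ 2)
        ((0 * b t ^ 2 - ε * ((2 : ℕ) * b t ^ 1 * deriv b t)) / (b t ^ 2) ^ 2) t :=
      (hasDerivAt_const t ε).div ((hb t ht).pow 2) (pow_ne_zero 2 hB0)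
    have h2 : HasDerivAt (fun s => (deriv b s) ^ 2 / (b s) ^ 2)
        (((2 : ℕ) * deriv b t ^ 1 *
            (-(deriv b t) ^ 2 / b t - |Λ| * b t - ε / b t - deriv a t * deriv b t / a t)
              * b t ^ 2 - deriv b t ^ 2 * ((2 : ℕ) * b t ^ 1 * deriv b t)) / (b t ^ 2) ^ 2) t :=
      ((hb'' t ht).pow 2).div ((hb t ht).pow 2) (pow_ne_zero 2 hB0)
    have h3 : HasDerivAt (fun s => 2 * deriv b s * deriv a s / (b s * a s))
        (((2 * (-(deriv b t) ^ 2 / b t - |Λ| * b t - ε / b t - deriv a t * deriv b t / a t)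
            * deriv a t + 2 * deriv b t * (-|Λ| * a t - 2 * deriv a t * deriv b t / b t))
            * (b t * a t)
          - 2 * deriv b t * deriv a t * (deriv b t * a t + b t * deriv a t))
          / (b t * a t) ^ 2) t :=
      ((((hb'' t ht).const_mul 2).mul (ha'' t ht)).div ((hb t ht).mul (ha t ht))
        (mul_ne_zero hB0 hA0))
    have h4 : HasDerivAt (fun s => 4 * π * (deriv φ s) ^ 2)
        (4 * π * ((2 : ℕ) * deriv φ t ^ 1 *
          (-(deriv a t / a t + 2 * deriv b t / b t) * deriv φ t))) t :=
      ((hφ'' t ht).pow 2).const_mul (4 * π)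
    have h5 := (((h1.const_add |Λ|).add h2).add h3).sub h4
    refine h5.congr_deriv ?_
    simp only [hP]
    field_simp
    ring
  refine ⟨key, ?_⟩
  intro t₀ ht₀ hcon t ht
  set g : ℝ → ℝ := fun s => P s * (a s ^ 2 * b s ^ 4) with hg
  have hg' : ∀ s ∈ Set.Ioo α β, HasDerivAt g 0 s := by
    intro s hs
    obtain ⟨hA, hB⟩ := hpos s hs
    have hA0 : a s ≠ 0 := hA.ne'
    have hB0 : b s ≠ 0 := hB.ne'
    have := (key s hs).mul (((ha s hs).pow 2).mul ((hb s hs).pow 4))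
    refine this.congr_deriv ?_
    simp only [Pi.mul_apply, Pi.pow_apply]
    field_simp
    ring
  have hconst : ∀ x y, x ∈ Set.Ioo α β → y ∈ Set.Ioo α β → x < y → g x = g y := by
    intro x y hx hy hxy
    have hsub : Set.Icc x y ⊆ Set.Ioo α β := fun z hz =>
      ⟨lt_of_lt_of_le hx.1 hz.1, lt_of_le_of_lt hz.2 hy.2⟩
    have hcont : ContinuousOn g (Set.Icc x y) := fun z hz =>
      (hg' z (hsub hz)).continuousAt.continuousWithinAt
    obtain ⟨c, _, hc⟩ := exists_hasDerivAt_eq_slope g (fun _ => (0 : ℝ)) hxy hcont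
      (fun z hz => hg' z (hsub ⟨le_of_lt hz.1, le_of_lt hz.2⟩))
    have hyx : y - x ≠ 0 := sub_ne_zero.mpr hxy.ne'
    have : g y - g x = 0 := by
      have := hc.symm
      rwa [div_eq_iff hyx, zero_mul] at this
    linarith
  have hcc : g t = g t₀ := by
    rcases lt_trichotomy t t₀ with h | h | h
    · exact hconst t t₀ ht ht₀ h
    · rw [h]
    · exact (hconst t₀ t ht₀ ht h).symm
  have hPt₀ : P t₀ = 0 := by simp only [hP]; linarith
  obtain ⟨hA, hB⟩ := hpos t ht
  have hgt : g t = 0 := by rw [hcc, hg]; simp [hPt₀]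
  have hPt : P t = 0 := by
    have hne : a t ^ 2 * b t ^ 4 ≠ 0 :=
      mul_ne_zero (pow_ne_zero 2 hA.ne') (pow_ne_zero 4 hB.ne')
    exact (mul_eq_zero.mp hgt).resolve_right hne
  have := hPt
  simp only [hP] at this
  linarith
end

section
/- Define F₁(H,σ) := (1 − H²)·(−(9/8)(σ² + H²) − (3/4)Hσ − (1/3)(1 − H²)) and F₂(H,σ) := (9/8)σ² − (9/4)Hσ − (1/3)(1 − H²) − (15/8)H² − Hσ·(−(9/8)(σ² + H²) − (3/4)Hσ − (1/3)(1 − H²)). Then for (H,σ) ∈ ℝ², one has F₁(H,σ) = 0 and F₂(H,σ) = 0 if and only if (H,σ) is one of the six points A = (−1, 5/3), B = (−1, 1), C = (−1, −1), D = (1, −5/3), E = (1, −1), F = (1, 1). -/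
/-- First component of the compactified expansion-normalised vector field. -/
noncomputable def F₁ (H σ : ℝ) : ℝ :=
  (1 - H ^ 2) * (-(9 / 8) * (σ ^ 2 + H ^ 2) - (3 / 4) * (H * σ) - (1 / 3) * (1 - H ^ 2))

/-- Second component of the compactified expansion-normalised vector field. -/
noncomputable def F₂ (H σ : ℝ) : ℝ :=
  (9 / 8) * σ ^ 2 - (9 / 4) * (H * σ) - (1 / 3) * (1 - H ^ 2) - (15 / 8) * H ^ 2
    - H * σ * (-(9 / 8) * (σ ^ 2 + H ^ 2) - (3 / 4) * (H * σ) - (1 / 3) * (1 - H ^ 2))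

/-- The equilibrium points of the compactified vacuum system are exactly the six points
`A = (−1, 5/3)`, `B = (−1, 1)`, `C = (−1, −1)`, `D = (1, −5/3)`, `E = (1, −1)`,
`F = (1, 1)`. -/
theorem equilibrium_points_classification (H σ : ℝ) :
    (F₁ H σ = 0 ∧ F₂ H σ = 0) ↔
      ((H, σ) = (-1, 5 / 3) ∨ (H, σ) = (-1, 1) ∨ (H, σ) = (-1, -1) ∨
       (H, σ) = (1, -5 / 3) ∨ (H, σ) = (1, -1) ∨ (H, σ) = (1, 1)) := by
  simp only [F₁, F₂, Prod.mk.injEq]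
  constructor
  · rintro ⟨h1, h2⟩
    rcases mul_eq_zero.mp h1 with hH | hQ
    · -- H² = 1
      have h' : (1 - H) * (1 + H) = 0 := by linear_combination hH
      rcases mul_eq_zero.mp h' with hH1 | hH2
      · -- H = 1
        have hH1 : H = 1 := by linarith
        subst hH1
        have hfac : (9 / 8) * ((σ - 1) * ((σ + 1) * (σ + 5 / 3))) = 0 := by
          linear_combination h2
        rcases mul_eq_zero.mp hfac with h9 | hfac
        · norm_num at h9
        rcases mul_eq_zero.mp hfac with hs | hfac
        · exact Or.inr (Or.inr (Or.inr (Or.inr (Or.inr ⟨rfl, by linarith⟩))))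
        rcases mul_eq_zero.mp hfac with hs | hs
        · exact Or.inr (Or.inr (Or.inr (Or.inr (Or.inl ⟨rfl, by linarith⟩))))
        · exact Or.inr (Or.inr (Or.inr (Or.inl ⟨rfl, by linarith⟩)))
      · -- H = -1
        have hH2 : H = -1 := by linarith
        subst hH2
        have hfac : (-(9 / 8)) * ((σ - 1) * ((σ + 1) * (σ - 5 / 3))) = 0 := by
          linear_combination h2
        rcases mul_eq_zero.mp hfac with h9 | hfac
        · norm_num at h9
        rcases mul_eq_zero.mp hfac with hs | hfac
        · exact Or.inr (Or.inl ⟨rfl, by linarith⟩)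
        rcases mul_eq_zero.mp hfac with hs | hs
        · exact Or.inr (Or.inr (Or.inl ⟨rfl, by linarith⟩))
        · exact Or.inl ⟨rfl, by linarith⟩
    · -- quadratic factor vanishes: contradiction
      exfalso
      have hR : (9 / 8) * σ ^ 2 - (9 / 4) * (H * σ) - (1 / 3) * (1 - H ^ 2)
          - (15 / 8) * H ^ 2 = 0 := by linear_combination h2 + (H * σ) * hQ
      have hkey : 3 * σ ^ 2 + (5 / 9) * H ^ 2 + 4 / 9 = 0 := by
        linear_combination (-2) * hQ + (2 / 3) * hR
      nlinarith [sq_nonneg σ, sq_nonneg H]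
  · rintro (⟨h1, h2⟩ | ⟨h1, h2⟩ | ⟨h1, h2⟩ | ⟨h1, h2⟩ | ⟨h1, h2⟩ | ⟨h1, h2⟩) <;>
      subst h1 <;> subst h2 <;> constructor <;> norm_num
end

section
/- Define F₁(H,σ) := (1 − H²)·(−(9/8)(σ² + H²) − (3/4)Hσ − (1/3)(1 − H²)). Then for all real σ and all H with −1 < H < 1 one has F₁(H,σ) < 0, and for all real σ one has F₁(1,σ) = F₁(−1,σ) = 0. Consequently, any differentiable solution (H_N, σ_N) of dH_N/dτ = F₁(H_N, σ_N) with −1 < H_N(τ) < 1 on an interval has strictly decreasing first component, and there are no periodic orbits of the compactified system with −1 < H_N < 1. -/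
lemma F₁_neg (H σ : ℝ) (h1 : -1 < H) (h2 : H < 1) : F₁ H σ < 0 := by
  have hpos : 0 < 1 - H ^ 2 := by nlinarith
  have : -(9 / 8) * (σ ^ 2 + H ^ 2) - (3 / 4) * (H * σ) - (1 / 3) * (1 - H ^ 2) < 0 := by
    nlinarith [sq_nonneg (σ + H / 3), sq_nonneg H, sq_nonneg σ]
  have := mul_pos hpos (neg_pos.mpr this)
  unfold F₁; nlinarith

lemma antiOn (I : Set ℝ) (hI : I.OrdConnected) (H σ : ℝ → ℝ)
    (hd : ∀ t ∈ I, HasDerivAt H (F₁ (H t) (σ t)) t)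
    (hb : ∀ t ∈ I, -1 < H t ∧ H t < 1) : StrictAntiOn H I := by
  have hconv : Convex ℝ I := hI.convex
  apply StrictAntiOn.mono (s := I) ?_ (le_refl I)
  apply strictAntiOn_of_deriv_neg hconv
  · exact fun t ht => ((hd t ht).continuousAt).continuousWithinAt
  · intro t ht
    have ht' : t ∈ I := interior_subset ht
    rw [(hd t ht').deriv]
    exact F₁_neg _ _ (hb t ht').1 (hb t ht').2

/-- `F₁` is strictly negative in the interior `−1 < H < 1` of the state space and vanishes
on the boundary `H = ±1`; consequently the first component of any solution of
`dH_N/dτ = F₁(H_N, σ_N)` staying in the interior is strictly decreasing, and the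
compactified system has no periodic orbits with `−1 < H_N < 1`. -/
theorem no_periodic_orbits :
    (∀ (H σ : ℝ), -1 < H → H < 1 → F₁ H σ < 0) ∧
    (∀ σ : ℝ, F₁ 1 σ = 0 ∧ F₁ (-1) σ = 0) ∧
    (∀ (I : Set ℝ), I.OrdConnected → ∀ (H σ : ℝ → ℝ),
      (∀ t ∈ I, HasDerivAt H (F₁ (H t) (σ t)) t) →
      (∀ t ∈ I, -1 < H t ∧ H t < 1) →
      StrictAntiOn H I) ∧
    ¬ ∃ (H σ : ℝ → ℝ) (T : ℝ), 0 < T ∧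
        (∀ t : ℝ, HasDerivAt H (F₁ (H t) (σ t)) t) ∧
        (∀ t : ℝ, -1 < H t ∧ H t < 1) ∧
        (∀ t : ℝ, H (t + T) = H t) := by
  refine ⟨F₁_neg, fun σ => ⟨by simp [F₁], by simp [F₁]⟩, antiOn, ?_⟩
  rintro ⟨H, σ, T, hT, hd, hb, hp⟩
  have hanti : StrictAntiOn H Set.univ :=
    antiOn Set.univ Set.ordConnected_univ H σ (fun t _ => hd t) (fun t _ => hb t)
  have := hanti (Set.mem_univ 0) (Set.mem_univ T) hT
  have h0 := hp 0
  rw [zero_add] at h0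
  linarith
end

section
/- Define F₁(H,σ) := (1 − H²)·(−(9/8)(σ² + H²) − (3/4)Hσ − (1/3)(1 − H²)), F₂(H,σ) := (9/8)σ² − (9/4)Hσ − (1/3)(1 − H²) − (15/8)H² − Hσ·(−(9/8)(σ² + H²) − (3/4)Hσ − (1/3)(1 − H²)), Z₂(H,σ) := (1/27)·(19H² + 8) − σ², and α₂(H,σ) := (19/12)H³ + (3/2)H²σ + (9/4)Hσ² − (19/12)H + (9/4)σ. Then for all real H, σ one has the polynomial identity (38/27)·H·F₁(H,σ) − 2σ·F₂(H,σ) = α₂(H,σ)·Z₂(H,σ). Consequently, along any solution of dH_N/dτ = F₁, dσ_N/dτ = F₂, the quantity Z₂(H_N,σ_N) satisfies dZ₂/dτ = α₂(H_N,σ_N)·Z₂(H_N,σ_N), so the sets {Z₂ = 0}, {Z₂ > 0}, {Z₂ < 0} are invariant; the set {Z₂ = 0} consists of the two curves σ = ±(1/(3√3))·√(19H² + 8) joining the saddle points to the source and sink. -/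
/-- The quantity whose zero set contains the stable/unstable manifolds of the saddles. -/
noncomputable def Z₂ (H σ : ℝ) : ℝ := (1 / 27) * (19 * H ^ 2 + 8) - σ ^ 2

/-- The auxiliary factor `α₂`. -/
noncomputable def α₂ (H σ : ℝ) : ℝ :=
  (19 / 12) * H ^ 3 + (3 / 2) * (H ^ 2 * σ) + (9 / 4) * (H * σ ^ 2)
    - (19 / 12) * H + (9 / 4) * σ

open Set in
lemma linear_ode_formula {a b : ℝ} {g al : ℝ → ℝ}
    (hα : ContinuousOn al (Set.Ioo a b))
    (hg : ∀ t ∈ Set.Ioo a b, HasDerivAt g (al t * g t) t)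
    {t₀ t : ℝ} (ht₀ : t₀ ∈ Set.Ioo a b) (ht : t ∈ Set.Ioo a b) :
    g t = g t₀ * Real.exp (∫ s in t₀..t, al s) := by
  set A : ℝ → ℝ := fun x => ∫ s in t₀..x, al s with hA
  have hsub : ∀ x ∈ Set.Ioo a b, Set.uIcc t₀ x ⊆ Set.Ioo a b := fun x hx =>
    Set.OrdConnected.uIcc_subset Set.ordConnected_Ioo ht₀ hx
  have hAderiv : ∀ x ∈ Set.Ioo a b, HasDerivAt A (al x) x := by
    intro x hx
    apply intervalIntegral.integral_hasDerivAt_right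
    · exact (hα.mono (hsub x hx)).intervalIntegrable
    · exact AEStronglyMeasurable.stronglyMeasurableAtFilter_of_mem
        (hα.aestronglyMeasurable measurableSet_Ioo) (Ioo_mem_nhds hx.1 hx.2)
    · exact hα.continuousAt (Ioo_mem_nhds hx.1 hx.2)
  set h : ℝ → ℝ := fun x => g x * Real.exp (-(A x)) with hh
  have hderiv : ∀ x ∈ Set.Ioo a b, HasDerivAt h 0 x := by
    intro x hx
    have : HasDerivAt (fun y => g y * Real.exp (-(A y)))
        (al x * g x * Real.exp (-(A x)) + g x * (Real.exp (-(A x)) * -al x)) x :=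
      (hg x hx).mul (((hAderiv x hx).neg).exp)
    convert this using 1
    ring
  have hIcc : Set.Icc (min t₀ t) (max t₀ t) ⊆ Set.Ioo a b := hsub t ht
  have hconst : h t = h t₀ := by
    have key : ∀ x ∈ Set.Icc (min t₀ t) (max t₀ t), h x = h (min t₀ t) := by
      apply constant_of_has_deriv_right_zero
      · exact fun x hx => ((hderiv x (hIcc hx)).continuousAt).continuousWithinAt
      · exact fun x hx => (hderiv x (hIcc (Set.mem_Icc_of_Ico hx))).hasDerivWithinAt
    rw [key t ⟨min_le_right _ _, le_max_right _ _⟩,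
        key t₀ ⟨min_le_left _ _, le_max_left _ _⟩]
  have hA0 : A t₀ = 0 := intervalIntegral.integral_same
  have : g t * Real.exp (-(A t)) = g t₀ := by
    simpa [hh, hA0] using hconst
  have hexp : Real.exp (-(A t)) ≠ 0 := Real.exp_ne_zero _
  field_simp [Real.exp_ne_zero] at this ⊢
  rw [← this]
  rw [mul_assoc, ← Real.exp_add]
  simp [A]

lemma key_identity (H σ : ℝ) :
    (38 / 27) * H * F₁ H σ - 2 * σ * F₂ H σ = α₂ H σ * Z₂ H σ := by
  unfold F₁ F₂ α₂ Z₂; ring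

/-- The identity `(38/27)·H·F₁ − 2σ·F₂ = α₂·Z₂` holds; consequently, along any solution of
the compactified system, `Z₂(H_N, σ_N)` satisfies `dZ₂/dτ = α₂·Z₂`, the sets
`{Z₂ = 0}`, `{Z₂ > 0}`, `{Z₂ < 0}` are invariant, and `{Z₂ = 0}` consists of the two
curves `σ = ±(1/(3√3))·√(19H² + 8)`. -/
theorem saddle_manifolds_invariant :
    (∀ H σ : ℝ, (38 / 27) * H * F₁ H σ - 2 * σ * F₂ H σ = α₂ H σ * Z₂ H σ) ∧
    (∀ (a b : ℝ) (H σ : ℝ → ℝ),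
      (∀ t ∈ Set.Ioo a b, HasDerivAt H (F₁ (H t) (σ t)) t) →
      (∀ t ∈ Set.Ioo a b, HasDerivAt σ (F₂ (H t) (σ t)) t) →
      ((∀ t ∈ Set.Ioo a b, HasDerivAt (fun τ => Z₂ (H τ) (σ τ))
          (α₂ (H t) (σ t) * Z₂ (H t) (σ t)) t) ∧
       (∀ t₀ ∈ Set.Ioo a b,
          (Z₂ (H t₀) (σ t₀) = 0 → ∀ t ∈ Set.Ioo a b, Z₂ (H t) (σ t) = 0) ∧
          (0 < Z₂ (H t₀) (σ t₀) → ∀ t ∈ Set.Ioo a b, 0 < Z₂ (H t) (σ t)) ∧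
          (Z₂ (H t₀) (σ t₀) < 0 → ∀ t ∈ Set.Ioo a b, Z₂ (H t) (σ t) < 0)))) ∧
    (∀ H σ : ℝ, Z₂ H σ = 0 ↔
      σ = (1 / (3 * Real.sqrt 3)) * Real.sqrt (19 * H ^ 2 + 8) ∨
      σ = -((1 / (3 * Real.sqrt 3)) * Real.sqrt (19 * H ^ 2 + 8))) := by
  refine ⟨key_identity, ?_, ?_⟩
  · intro a b H σ hH hσ
    have hZderiv : ∀ t ∈ Set.Ioo a b, HasDerivAt (fun τ => Z₂ (H τ) (σ τ))
        (α₂ (H t) (σ t) * Z₂ (H t) (σ t)) t := by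
      intro t ht
      have h1 : HasDerivAt (fun τ => Z₂ (H τ) (σ τ))
          ((1 / 27) * (19 * ((2 : ℕ) * H t ^ (2 - 1) * F₁ (H t) (σ t)))
            - (2 : ℕ) * σ t ^ (2 - 1) * F₂ (H t) (σ t)) t := by
        unfold Z₂
        exact ((((((hH t ht).pow 2).const_mul 19).add_const 8).const_mul (1 / 27)).sub
          ((hσ t ht).pow 2))
      convert h1 using 1
      rw [← key_identity]
      push_cast
      ring
    refine ⟨hZderiv, ?_⟩
    intro t₀ ht₀
    have hαc : ContinuousOn (fun t => α₂ (H t) (σ t)) (Set.Ioo a b) := by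
      intro x hx
      have hHc : ContinuousAt H x := (hH x hx).continuousAt
      have hσc : ContinuousAt σ x := (hσ x hx).continuousAt
      have : ContinuousAt (fun t => α₂ (H t) (σ t)) x := by
        unfold α₂
        fun_prop
      exact this.continuousWithinAt
    have hform : ∀ t ∈ Set.Ioo a b, Z₂ (H t) (σ t) =
        Z₂ (H t₀) (σ t₀) * Real.exp (∫ s in t₀..t, α₂ (H s) (σ s)) := fun t ht =>
      linear_ode_formula hαc hZderiv ht₀ ht
    refine ⟨?_, ?_, ?_⟩
    · intro h0 t ht; rw [hform t ht, h0, zero_mul]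
    · intro h0 t ht; rw [hform t ht]; positivity
    · intro h0 t ht; rw [hform t ht]
      exact mul_neg_of_neg_of_pos h0 (Real.exp_pos _)
  · intro H σ
    set c : ℝ := (1 / (3 * Real.sqrt 3)) * Real.sqrt (19 * H ^ 2 + 8) with hc
    have h3 : (0 : ℝ) < Real.sqrt 3 := Real.sqrt_pos.mpr (by norm_num)
    have hc2 : c ^ 2 = (1 / 27) * (19 * H ^ 2 + 8) := by
      rw [hc, mul_pow, Real.sq_sqrt (by positivity : (0:ℝ) ≤ 19 * H ^ 2 + 8), div_pow, mul_pow,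
        Real.sq_sqrt (by norm_num : (0:ℝ) ≤ 3)]
      norm_num
    have key : Z₂ H σ = (c - σ) * (c + σ) := by
      unfold Z₂; rw [← hc2]; ring
    rw [key, mul_eq_zero]
    constructor
    · rintro (h | h)
      · left; linarith
      · right; linarith
    · rintro (h | h)
      · left; linarith
      · right; linarith
end

section
/- Fix real constants c₁ and c₂ and let I be an open interval on which cos(√3·(c₁ + t)) ≠ 0. Define H(t) := −√3·tan(√3·(c₁ + t)) and σ(t) := c₂/cos(√3·(c₁ + t)) + (1/√3)·tan(√3·(c₁ + t)) on I. Then H'(t) = −3 − H(t)² and σ'(t) = 1 − H(t)·σ(t) for all t ∈ I. Moreover, the constraint identity 1 + (5/16)·H(t)² − (3/16)·σ(t)² − (1/8)·H(t)σ(t) = 0 holds for all t ∈ I if and only if 3·c₂² = 16, i.e. c₂ = ±4/√3. -/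
open Real Set

private lemma bianchi_aux1 (r s c : ℝ) (hc : c ≠ 0) (hr : r ≠ 0)
    (h3 : r ^ 2 = 3) (hs : s ^ 2 + c ^ 2 = 1) :
    -3 - (-r * (s / c)) ^ 2 = -r * (r / c ^ 2) := by
  field_simp
  linear_combination (1 - s ^ 2) * h3 - 3 * hs

private lemma bianchi_aux2 (r s c c₂ : ℝ) (hc : c ≠ 0) (hr : r ≠ 0)
    (h3 : r ^ 2 = 3) (hs : s ^ 2 + c ^ 2 = 1) :
    1 - -r * (s / c) * (c₂ / c + 1 / r * (s / c))
      = c₂ * (r * s / c ^ 2) + 1 / r * (r / c ^ 2) := by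
  field_simp
  linear_combination hs

private lemma bianchi_key (r s c c₂ : ℝ) (hc : c ≠ 0) (hr : r ≠ 0)
    (h3 : r ^ 2 = 3) (hs : s ^ 2 + c ^ 2 = 1) :
    1 + 5 / 16 * (-r * (s / c)) ^ 2 - 3 / 16 * (c₂ / c + 1 / r * (s / c)) ^ 2
      - 1 / 8 * (-r * (s / c) * (c₂ / c + 1 / r * (s / c)))
      = (16 - 3 * c₂ ^ 2) / (16 * c ^ 2) := by
  field_simp
  linear_combination
    ((40 * r ^ 2 + 8) * s ^ 2 + 16 * r * c₂ * s) * h3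
    + 128 * r ^ 2 * hs

/-- The explicit Bianchi I (`ε = 0`) solutions: on an open interval where
`cos(√3(c₁+t)) ≠ 0`, the functions `H = −√3·tan(√3(c₁+t))` and
`σ = c₂/cos(√3(c₁+t)) + (1/√3)·tan(√3(c₁+t))` solve `H' = −3 − H²`, `σ' = 1 − Hσ`, and
the constraint `1 + (5/16)H² − (3/16)σ² − (1/8)Hσ = 0` holds on the interval if and only
if `3c₂² = 16`, i.e. `c₂ = ±4/√3`. -/
theorem bianchi_I_explicit_solution (c₁ c₂ a b : ℝ) (hab : a < b)
    (hcos : ∀ t ∈ Set.Ioo a b, Real.cos (Real.sqrt 3 * (c₁ + t)) ≠ 0)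
    (H σ : ℝ → ℝ)
    (hH : H = fun t => -Real.sqrt 3 * Real.tan (Real.sqrt 3 * (c₁ + t)))
    (hσ : σ = fun t => c₂ / Real.cos (Real.sqrt 3 * (c₁ + t))
      + (1 / Real.sqrt 3) * Real.tan (Real.sqrt 3 * (c₁ + t))) :
    (∀ t ∈ Set.Ioo a b, HasDerivAt H (-3 - (H t) ^ 2) t) ∧
    (∀ t ∈ Set.Ioo a b, HasDerivAt σ (1 - H t * σ t) t) ∧
    ((∀ t ∈ Set.Ioo a b,
        1 + (5 / 16) * (H t) ^ 2 - (3 / 16) * (σ t) ^ 2 - (1 / 8) * (H t * σ t) = 0)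
      ↔ 3 * c₂ ^ 2 = 16) ∧
    (3 * c₂ ^ 2 = 16 ↔ (c₂ = 4 / Real.sqrt 3 ∨ c₂ = -(4 / Real.sqrt 3))) := by
  have h3 : Real.sqrt 3 ^ 2 = 3 := Real.sq_sqrt (by norm_num)
  have h3pos : (0:ℝ) < Real.sqrt 3 := Real.sqrt_pos.mpr (by norm_num)
  have h3ne : Real.sqrt 3 ≠ 0 := ne_of_gt h3pos
  subst hH hσ
  have hu : ∀ t : ℝ, HasDerivAt (fun t => Real.sqrt 3 * (c₁ + t)) (Real.sqrt 3) t := by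
    intro t
    simpa using ((hasDerivAt_id t).const_add c₁).const_mul (Real.sqrt 3)
  have htan : ∀ t ∈ Set.Ioo a b, HasDerivAt (fun t => Real.tan (Real.sqrt 3 * (c₁ + t)))
      (Real.sqrt 3 / Real.cos (Real.sqrt 3 * (c₁ + t)) ^ 2) t := by
    intro t ht
    have h := (Real.hasDerivAt_tan (hcos t ht)).comp t (hu t)
    simpa [Function.comp_def, div_eq_mul_inv, mul_comm] using h
  have hdiv : ∀ t ∈ Set.Ioo a b, HasDerivAt (fun t => c₂ / Real.cos (Real.sqrt 3 * (c₁ + t)))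
      (c₂ * (Real.sqrt 3 * Real.sin (Real.sqrt 3 * (c₁ + t))
        / Real.cos (Real.sqrt 3 * (c₁ + t)) ^ 2)) t := by
    intro t ht
    have hc := (Real.hasDerivAt_cos (Real.sqrt 3 * (c₁ + t))).comp t (hu t)
    have h := (hc.inv (hcos t ht)).const_mul c₂
    have heq : c₂ * (-(-Real.sin (Real.sqrt 3 * (c₁ + t)) * Real.sqrt 3)
          / Real.cos (Real.sqrt 3 * (c₁ + t)) ^ 2)
        = c₂ * (Real.sqrt 3 * Real.sin (Real.sqrt 3 * (c₁ + t))
          / Real.cos (Real.sqrt 3 * (c₁ + t)) ^ 2) := by ring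
    simp only [Function.comp] at h
    rw [heq] at h
    simpa [div_eq_mul_inv] using h
  have hsc : ∀ t : ℝ, Real.sin (Real.sqrt 3 * (c₁ + t)) ^ 2
      + Real.cos (Real.sqrt 3 * (c₁ + t)) ^ 2 = 1 := fun t => Real.sin_sq_add_cos_sq _
  refine ⟨?_, ?_, ?_, ?_⟩
  · intro t ht
    have hc := hcos t ht
    have h := (htan t ht).const_mul (-Real.sqrt 3)
    have heq : -3 - (-Real.sqrt 3 * Real.tan (Real.sqrt 3 * (c₁ + t))) ^ 2
        = -Real.sqrt 3 * (Real.sqrt 3 / Real.cos (Real.sqrt 3 * (c₁ + t)) ^ 2) := by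
      rw [Real.tan_eq_sin_div_cos]
      exact bianchi_aux1 _ _ _ hc h3ne h3 (hsc t)
    have h' : HasDerivAt (fun t => -Real.sqrt 3 * Real.tan (Real.sqrt 3 * (c₁ + t)))
        (-3 - (-Real.sqrt 3 * Real.tan (Real.sqrt 3 * (c₁ + t))) ^ 2) t := by
      rw [heq]; exact h
    exact h'
  · intro t ht
    have hc := hcos t ht
    have h := (hdiv t ht).add ((htan t ht).const_mul (1 / Real.sqrt 3))
    have heq : 1 - (-Real.sqrt 3 * Real.tan (Real.sqrt 3 * (c₁ + t)))
          * (c₂ / Real.cos (Real.sqrt 3 * (c₁ + t))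
            + 1 / Real.sqrt 3 * Real.tan (Real.sqrt 3 * (c₁ + t)))
        = c₂ * (Real.sqrt 3 * Real.sin (Real.sqrt 3 * (c₁ + t))
            / Real.cos (Real.sqrt 3 * (c₁ + t)) ^ 2)
          + 1 / Real.sqrt 3 * (Real.sqrt 3 / Real.cos (Real.sqrt 3 * (c₁ + t)) ^ 2) := by
      rw [Real.tan_eq_sin_div_cos]
      exact bianchi_aux2 _ _ _ _ hc h3ne h3 (hsc t)
    have h' : HasDerivAt (fun t => c₂ / Real.cos (Real.sqrt 3 * (c₁ + t))
        + 1 / Real.sqrt 3 * Real.tan (Real.sqrt 3 * (c₁ + t)))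
        (1 - (-Real.sqrt 3 * Real.tan (Real.sqrt 3 * (c₁ + t)))
          * (c₂ / Real.cos (Real.sqrt 3 * (c₁ + t))
            + 1 / Real.sqrt 3 * Real.tan (Real.sqrt 3 * (c₁ + t)))) t := by
      rw [heq]; exact h
    exact h'
  · constructor
    · intro hall
      have tmid : (a + b) / 2 ∈ Set.Ioo a b := ⟨by linarith, by linarith⟩
      have h := hall _ tmid
      have hc := hcos _ tmid
      simp only [Real.tan_eq_sin_div_cos] at h
      rw [bianchi_key _ _ _ _ hc h3ne h3 (hsc _)] at h
      have hc2 : (16:ℝ) * Real.cos (Real.sqrt 3 * (c₁ + (a + b) / 2)) ^ 2 ≠ 0 := by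
        positivity
      rw [div_eq_zero_iff] at h
      rcases h with h | h
      · linarith
      · exact absurd h hc2
    · intro hc2 t ht
      have hc := hcos t ht
      simp only [Real.tan_eq_sin_div_cos]
      rw [bianchi_key _ _ _ _ hc h3ne h3 (hsc t)]
      rw [show (16:ℝ) - 3 * c₂ ^ 2 = 0 by linarith]
      simp
  · constructor
    · intro h
      have hfac : (c₂ - 4 / Real.sqrt 3) * (c₂ + 4 / Real.sqrt 3) = 0 := by
        have hr2 : (4 / Real.sqrt 3) ^ 2 = 16 / 3 := by rw [div_pow, h3]; norm_num
        have : c₂ ^ 2 - (4 / Real.sqrt 3) ^ 2 = 0 := by rw [hr2]; linarith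
        linear_combination this
      rcases mul_eq_zero.mp hfac with h' | h'
      · exact Or.inl (by linarith)
      · exact Or.inr (by linarith)
    · rintro (h | h) <;> subst h
      · rw [div_pow, h3]; norm_num
      · rw [neg_pow, div_pow, h3]; norm_num
end

section
/- Define F₁(H,σ) := (1 − H²)·(−(9/8)(σ² + H²) − (3/4)Hσ − (1/3)(1 − H²)) and F₂(H,σ) := (9/8)σ² − (9/4)Hσ − (1/3)(1 − H²) − (15/8)H² − Hσ·(−(9/8)(σ² + H²) − (3/4)Hσ − (1/3)(1 − H²)), and let L(H,σ) be the 2×2 matrix of partial derivatives (∂F₁/∂H, ∂F₁/∂σ; ∂F₂/∂H, ∂F₂/∂σ). Then the characteristic polynomial of L at A = (−1, 5/3) is (X + 6)(X + 2); at B = (−1, 1) it is (X − 3/2)(X + 3); at C = (−1, −1) it is (X + 6)²; at D = (1, −5/3) it is (X − 2)(X − 6); at E = (1, −1) it is (X + 3/2)(X − 3); and at F = (1, 1) it is (X − 6)². In particular A and C are sinks, D and F are sources, and B and E are saddle points of the linearized system. -/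
open Polynomial

/-- The Jacobian matrix of `(F₁, F₂)` at `(H, σ)`. -/
noncomputable def L (H σ : ℝ) : Matrix (Fin 2) (Fin 2) ℝ :=
  !![deriv (fun x => F₁ x σ) H, deriv (fun y => F₁ H y) σ;
     deriv (fun x => F₂ x σ) H, deriv (fun y => F₂ H y) σ]

lemma hd5 (a b c d e f x : ℝ) :
    HasDerivAt (fun x : ℝ => a*x^5 + b*x^4 + c*x^3 + d*x^2 + e*x + f)
      (5*a*x^4 + 4*b*x^3 + 3*c*x^2 + 2*d*x + e) x := by
  have h := ((((((hasDerivAt_pow 5 x).const_mul a).add ((hasDerivAt_pow 4 x).const_mul b)).add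
      ((hasDerivAt_pow 3 x).const_mul c)).add ((hasDerivAt_pow 2 x).const_mul d)).add
      ((hasDerivAt_id x).const_mul e)).add_const f
  exact (h.congr_deriv (by push_cast; ring)).congr_of_eventuallyEq
    (Filter.Eventually.of_forall fun y => by simp only [Pi.add_apply, id])

lemma my_charpoly_fin_two (M : Matrix (Fin 2) (Fin 2) ℝ) :
    M.charpoly = X ^ 2 - C M.trace * X + C M.det := by
  rw [Matrix.charpoly, Matrix.det_fin_two,
    Matrix.charmatrix_apply_ne M 0 1 (by decide), Matrix.charmatrix_apply_ne M 1 0 (by decide),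
    Matrix.charmatrix_apply_eq, Matrix.charmatrix_apply_eq]
  simp only [Matrix.trace_fin_two, Matrix.det_fin_two, C_add, C_mul, C_sub]
  ring

lemma charpoly_aux (M : Matrix (Fin 2) (Fin 2) ℝ) (p q : ℝ)
    (h1 : M.trace = p + q) (h2 : M.det = p * q) :
    M.charpoly = (X - C p) * (X - C q) := by
  rw [my_charpoly_fin_two, h1, h2]
  simp only [C_add, C_mul]
  ring

lemma jacA : L (-1) (5 / 3) = !![(-6), 0; (44/9), (-2)] := by
  have h1 : (fun x => F₁ x (5 / 3)) = fun x : ℝ => 0*x^5 + (19/24)*x^4 + (5/4)*x^3 + (8/3)*x^2 + (-5/4)*x + (-83/24) := by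
    funext x; simp only [F₁]; ring
  have h2 : (fun x => F₂ x (5 / 3)) = fun x : ℝ => 0*x^5 + 0*x^4 + (95/72)*x^3 + (13/24)*x^2 + (145/72)*x + (67/24) := by
    funext x; simp only [F₂]; ring
  have h3 : (fun y => F₁ (-1) y) = fun _ : ℝ => (0:ℝ) := by
    funext y; simp only [F₁]; ring
  have h4 : (fun y => F₂ (-1) y) = fun y : ℝ => 0*y^5 + 0*y^4 + (-9/8)*y^3 + (15/8)*y^2 + (9/8)*y + (-15/8) := by
    funext y; simp only [F₂]; ring
  simp only [L, h1, h2, h3, h4, (hd5 _ _ _ _ _ _ _).deriv, deriv_const]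
  norm_num

lemma jacB : L (-1) 1 = !![(-3), 0; (19/6), (3/2)] := by
  have h1 : (fun x => F₁ x 1) = fun x : ℝ => 0*x^5 + (19/24)*x^4 + (3/4)*x^3 + (2/3)*x^2 + (-3/4)*x + (-35/24) := by
    funext x; simp only [F₁]; ring
  have h2 : (fun x => F₂ x 1) = fun x : ℝ => 0*x^5 + 0*x^4 + (19/24)*x^3 + (-19/24)*x^2 + (-19/24)*x + (19/24) := by
    funext x; simp only [F₂]; ring
  have h3 : (fun y => F₁ (-1) y) = fun _ : ℝ => (0:ℝ) := by
    funext y; simp only [F₁]; ring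
  have h4 : (fun y => F₂ (-1) y) = fun y : ℝ => 0*y^5 + 0*y^4 + (-9/8)*y^3 + (15/8)*y^2 + (9/8)*y + (-15/8) := by
    funext y; simp only [F₂]; ring
  simp only [L, h1, h2, h3, h4, (hd5 _ _ _ _ _ _ _).deriv, deriv_const]
  norm_num

lemma jacC : L (-1) (-1) = !![(-6), 0; 0, (-6)] := by
  have h1 : (fun x => F₁ x (-1)) = fun x : ℝ => 0*x^5 + (19/24)*x^4 + (-3/4)*x^3 + (2/3)*x^2 + (3/4)*x + (-35/24) := by
    funext x; simp only [F₁]; ring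
  have h2 : (fun x => F₂ x (-1)) = fun x : ℝ => 0*x^5 + 0*x^4 + (-19/24)*x^3 + (-19/24)*x^2 + (19/24)*x + (19/24) := by
    funext x; simp only [F₂]; ring
  have h3 : (fun y => F₁ (-1) y) = fun _ : ℝ => (0:ℝ) := by
    funext y; simp only [F₁]; ring
  have h4 : (fun y => F₂ (-1) y) = fun y : ℝ => 0*y^5 + 0*y^4 + (-9/8)*y^3 + (15/8)*y^2 + (9/8)*y + (-15/8) := by
    funext y; simp only [F₂]; ring
  simp only [L, h1, h2, h3, h4, (hd5 _ _ _ _ _ _ _).deriv, deriv_const]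
  norm_num

lemma jacD : L 1 (-5 / 3) = !![6, 0; (-44/9), 2] := by
  have h1 : (fun x => F₁ x (-5 / 3)) = fun x : ℝ => 0*x^5 + (19/24)*x^4 + (-5/4)*x^3 + (8/3)*x^2 + (5/4)*x + (-83/24) := by
    funext x; simp only [F₁]; ring
  have h2 : (fun x => F₂ x (-5 / 3)) = fun x : ℝ => 0*x^5 + 0*x^4 + (-95/72)*x^3 + (13/24)*x^2 + (-145/72)*x + (67/24) := by
    funext x; simp only [F₂]; ring
  have h3 : (fun y => F₁ 1 y) = fun _ : ℝ => (0:ℝ) := by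
    funext y; simp only [F₁]; ring
  have h4 : (fun y => F₂ 1 y) = fun y : ℝ => 0*y^5 + 0*y^4 + (9/8)*y^3 + (15/8)*y^2 + (-9/8)*y + (-15/8) := by
    funext y; simp only [F₂]; ring
  simp only [L, h1, h2, h3, h4, (hd5 _ _ _ _ _ _ _).deriv, deriv_const]
  norm_num

lemma jacE : L 1 (-1) = !![3, 0; (-19/6), (-3/2)] := by
  have h1 : (fun x => F₁ x (-1)) = fun x : ℝ => 0*x^5 + (19/24)*x^4 + (-3/4)*x^3 + (2/3)*x^2 + (3/4)*x + (-35/24) := by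
    funext x; simp only [F₁]; ring
  have h2 : (fun x => F₂ x (-1)) = fun x : ℝ => 0*x^5 + 0*x^4 + (-19/24)*x^3 + (-19/24)*x^2 + (19/24)*x + (19/24) := by
    funext x; simp only [F₂]; ring
  have h3 : (fun y => F₁ 1 y) = fun _ : ℝ => (0:ℝ) := by
    funext y; simp only [F₁]; ring
  have h4 : (fun y => F₂ 1 y) = fun y : ℝ => 0*y^5 + 0*y^4 + (9/8)*y^3 + (15/8)*y^2 + (-9/8)*y + (-15/8) := by
    funext y; simp only [F₂]; ring
  simp only [L, h1, h2, h3, h4, (hd5 _ _ _ _ _ _ _).deriv, deriv_const]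
  norm_num

lemma jacF : L 1 1 = !![6, 0; 0, 6] := by
  have h1 : (fun x => F₁ x 1) = fun x : ℝ => 0*x^5 + (19/24)*x^4 + (3/4)*x^3 + (2/3)*x^2 + (-3/4)*x + (-35/24) := by
    funext x; simp only [F₁]; ring
  have h2 : (fun x => F₂ x 1) = fun x : ℝ => 0*x^5 + 0*x^4 + (19/24)*x^3 + (-19/24)*x^2 + (-19/24)*x + (19/24) := by
    funext x; simp only [F₂]; ring
  have h3 : (fun y => F₁ 1 y) = fun _ : ℝ => (0:ℝ) := by
    funext y; simp only [F₁]; ring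
  have h4 : (fun y => F₂ 1 y) = fun y : ℝ => 0*y^5 + 0*y^4 + (9/8)*y^3 + (15/8)*y^2 + (-9/8)*y + (-15/8) := by
    funext y; simp only [F₂]; ring
  simp only [L, h1, h2, h3, h4, (hd5 _ _ _ _ _ _ _).deriv, deriv_const]
  norm_num

/-- Characteristic polynomials of the linearization at the six equilibrium points:
`A` and `C` are sinks, `D` and `F` are sources, and `B` and `E` are saddle points. -/
theorem linearization_at_equilibria :
    (L (-1) (5 / 3)).charpoly = (X + C 6) * (X + C 2) ∧
    (L (-1) 1).charpoly = (X - C (3 / 2)) * (X + C 3) ∧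
    (L (-1) (-1)).charpoly = (X + C 6) ^ 2 ∧
    (L 1 (-5 / 3)).charpoly = (X - C 2) * (X - C 6) ∧
    (L 1 (-1)).charpoly = (X + C (3 / 2)) * (X - C 3) ∧
    (L 1 1).charpoly = (X - C 6) ^ 2 ∧
    (∀ x : ℝ, (L (-1) (5 / 3)).charpoly.IsRoot x → x < 0) ∧
    (∀ x : ℝ, (L (-1) (-1)).charpoly.IsRoot x → x < 0) ∧
    (∀ x : ℝ, (L 1 (-5 / 3)).charpoly.IsRoot x → 0 < x) ∧
    (∀ x : ℝ, (L 1 1).charpoly.IsRoot x → 0 < x) ∧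
    (∃ x y : ℝ, (L (-1) 1).charpoly.IsRoot x ∧ (L (-1) 1).charpoly.IsRoot y ∧
      x < 0 ∧ 0 < y) ∧
    (∃ x y : ℝ, (L 1 (-1)).charpoly.IsRoot x ∧ (L 1 (-1)).charpoly.IsRoot y ∧
      x < 0 ∧ 0 < y) := by
  have hA := charpoly_aux (!![(-6), 0; (44/9), (-2)]) (-6) (-2)
    (by norm_num [Matrix.trace_fin_two_of]) (by norm_num [Matrix.det_fin_two_of])
  have hB := charpoly_aux (!![(-3), 0; (19/6), (3/2)]) (3/2) (-3)
    (by norm_num [Matrix.trace_fin_two_of]) (by norm_num [Matrix.det_fin_two_of])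
  have hC := charpoly_aux (!![(-6), 0; 0, (-6)]) (-6) (-6)
    (by norm_num [Matrix.trace_fin_two_of]) (by norm_num [Matrix.det_fin_two_of])
  have hD := charpoly_aux (!![6, 0; (-44/9), 2]) 2 6
    (by norm_num [Matrix.trace_fin_two_of]) (by norm_num [Matrix.det_fin_two_of])
  have hE := charpoly_aux (!![3, 0; (-19/6), (-3/2)]) (-3/2) 3
    (by norm_num [Matrix.trace_fin_two_of]) (by norm_num [Matrix.det_fin_two_of])
  have hF := charpoly_aux (!![6, 0; 0, 6]) 6 6
    (by norm_num [Matrix.trace_fin_two_of]) (by norm_num [Matrix.det_fin_two_of])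
  have eA : (L (-1) (5 / 3)).charpoly = (X + C 6) * (X + C 2) := by
    rw [jacA, hA]; norm_num [C_neg]
  have eB : (L (-1) 1).charpoly = (X - C (3 / 2)) * (X + C 3) := by
    rw [jacB, hB]; norm_num [C_neg]
  have eC : (L (-1) (-1)).charpoly = (X + C 6) ^ 2 := by
    rw [jacC, hC]; norm_num [C_neg]; ring
  have eD : (L 1 (-5 / 3)).charpoly = (X - C 2) * (X - C 6) := by
    rw [jacD, hD]
  have eE : (L 1 (-1)).charpoly = (X + C (3 / 2)) * (X - C 3) := by
    rw [jacE, hE]; norm_num [C_neg]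
  have eF : (L 1 1).charpoly = (X - C 6) ^ 2 := by
    rw [jacF, hF]; ring
  refine ⟨eA, eB, eC, eD, eE, eF, ?_, ?_, ?_, ?_, ?_, ?_⟩
  · intro x hx
    rw [eA] at hx
    simp only [IsRoot, eval_mul, eval_add, eval_X, eval_C] at hx
    rcases mul_eq_zero.mp hx with h | h <;> linarith
  · intro x hx
    rw [eC] at hx
    simp only [IsRoot, eval_pow, eval_add, eval_X, eval_C] at hx
    have := sq_eq_zero_iff.mp hx
    linarith
  · intro x hx
    rw [eD] at hx
    simp only [IsRoot, eval_mul, eval_sub, eval_X, eval_C] at hx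
    rcases mul_eq_zero.mp hx with h | h <;> linarith
  · intro x hx
    rw [eF] at hx
    simp only [IsRoot, eval_pow, eval_sub, eval_X, eval_C] at hx
    have := sq_eq_zero_iff.mp hx
    linarith
  · refine ⟨-3, 3/2, ?_, ?_, by norm_num, by norm_num⟩ <;>
      · simp only [eB, IsRoot, eval_mul, eval_sub, eval_add, eval_X, eval_C]
        norm_num
  · refine ⟨-3/2, 3, ?_, ?_, by norm_num, by norm_num⟩ <;>
      · simp only [eE, IsRoot, eval_mul, eval_sub, eval_add, eval_X, eval_C]
        norm_num
end
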